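/- Let X be exponentially distributed with rate μ, let g(p) = min(αp, 1), h(p) = min(βp, 1) with α > β > 1, and b, θ ≥ 0 with θ > b, b < θ ≤ (1+b)β − 1, and μB ≥ 1 + ln(β(1+b)/(1+θ)). Then the deductible contract f*(x) = (x − d)₊ with d = (1/μ)ln((1+θ)/(1+b)) minimizes (1+b)H_g(X − f(X)) + (1+θ)E[f(X)] over continuous nondecreasing f with f(0)=0 and 0 ≤ f' ≤ 1, and this f* satisfies the constraint H_h(f*(X)) ≤ B (the constraint does not bind). -/

import Mathlib

open MeasureTheory Set Real

/-- The deductible contract `x ↦ (x − d)₊` as a Stieltjes function. -/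
noncomputable def deductibleContract (d : ℝ) : StieltjesFunction ℝ where
  toFun := fun x => max (x - d) 0
  mono' := fun x y h => max_le_max (sub_le_sub_right h d) le_rfl
  right_continuous' := fun x =>
    ((continuous_id.sub continuous_const).max continuous_const).continuousWithinAt

lemma exp_integral_Ioi' (μ a : ℝ) (hμ : 0 < μ) :
    ∫ t in Ioi a, Real.exp (-μ * t) = Real.exp (-μ * a) / μ := by
  have hderiv : ∀ x ∈ Ici a, HasDerivAt (fun t => -(1/μ) * Real.exp (-μ * t))
      (Real.exp (-μ * x)) x := by
    intro x _
    have h1 : HasDerivAt (fun t : ℝ => -μ * t) (-μ) x := by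
      simpa using (hasDerivAt_id x).const_mul (-μ)
    have h2 := (h1.exp).const_mul (-(1/μ))
    refine h2.congr_deriv ?_
    field_simp
  have hint : IntegrableOn (fun t => Real.exp (-μ * t)) (Ioi a) volume :=
    exp_neg_integrableOn_Ioi a hμ
  have htend : Filter.Tendsto (fun t => -(1/μ) * Real.exp (-μ * t)) Filter.atTop (nhds 0) := by
    have h0 : Filter.Tendsto (fun t : ℝ => -μ * t) Filter.atTop Filter.atBot :=
      Filter.tendsto_id.const_mul_atTop_of_neg (neg_neg_iff_pos.mpr hμ)
    have := (Real.tendsto_exp_atBot.comp h0).const_mul (-(1/μ))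
    simpa using this
  have := integral_Ioi_of_hasDerivAt_of_tendsto' hderiv hint htend
  rw [this]
  field_simp
  ring

lemma ded_measure (d : ℝ) : (deductibleContract d).measure = volume.restrict (Ioi d) := by
  refine Measure.ext_of_Ioc _ _ (fun a b hab => ?_)
  rw [StieltjesFunction.measure_Ioc, Measure.restrict_apply measurableSet_Ioc,
    Ioc_inter_Ioi, Real.volume_Ioc]
  have h1 : (deductibleContract d) b = max (b - d) 0 := rfl
  have h2 : (deductibleContract d) a = max (a - d) 0 := rfl
  rw [h1, h2]
  rcases le_total a d with h | h
  · rcases le_total b d with h' | h'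
    · rw [max_eq_right (by linarith), max_eq_right (by linarith), sub_zero,
        max_eq_right h]
      simp [ENNReal.ofReal_of_nonpos, ENNReal.ofReal_eq_zero, sub_nonpos.mpr h']
    · rw [max_eq_left (by linarith), max_eq_right (by linarith), max_eq_right h, sub_zero]
  · rw [max_eq_left (by linarith), max_eq_left (by linarith : (0:ℝ) ≤ a - d), max_eq_left h]
    ring_nf

lemma lip_measure_le (f : StieltjesFunction ℝ) (hf : Continuous f)
    (hlip : ∀ x y : ℝ, x ≤ y → f y - f x ≤ y - x) : f.measure ≤ volume := by
  set G : StieltjesFunction ℝ :=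
    { toFun := fun x => x - f x
      mono' := fun x y h => by have := hlip x y h; simp only; linarith
      right_continuous' := fun x => (continuous_id.sub hf).continuousWithinAt } with hG
  have hsum : f.measure + G.measure = volume := by
    refine Measure.ext_of_Ioc' _ _ (fun a b hab => ?_) (fun a b hab => ?_)
    · rw [Measure.add_apply, StieltjesFunction.measure_Ioc, StieltjesFunction.measure_Ioc]
      exact (ENNReal.add_lt_top.mpr ⟨ENNReal.ofReal_lt_top, ENNReal.ofReal_lt_top⟩).ne
    rw [Measure.add_apply, StieltjesFunction.measure_Ioc, StieltjesFunction.measure_Ioc,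
      Real.volume_Ioc]
    have hGb : G b = b - f b := rfl
    have hGa : G a = a - f a := rfl
    rw [hGb, hGa, ← ENNReal.ofReal_add (by have := f.mono hab.le; linarith)
      (by have := hlip a b hab.le; linarith)]
    ring_nf
  calc f.measure ≤ f.measure + G.measure := Measure.le_add_right le_rfl
    _ = volume := hsum

/-- Case 2a of the constrained buyer's problem: for `X ~ Exp(μ)`, AVaR distortions
`g(p)=min(αp,1)`, `h(p)=min(βp,1)` with `α > β > 1`, `b < θ ≤ (1+b)β − 1` and
`μB ≥ 1 + ln(β(1+b)/(1+θ))`, the deductible contract with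
`d = (1/μ) ln((1+θ)/(1+b))` minimizes the buyer's objective, and the regulator's
constraint `H_h(f*(X)) ≤ B` is not binding. -/
theorem stmt_17 (μ α β b θ B : ℝ) (hμ : 0 < μ) (hβ : 1 < β) (hαβ : β < α)
    (hb : 0 ≤ b) (hbθ : b < θ) (hθβ : θ ≤ (1 + b) * β - 1)
    (hB : 1 + Real.log (β * (1 + b) / (1 + θ)) ≤ μ * B)
    (d : ℝ) (hd : d = (1 / μ) * Real.log ((1 + θ) / (1 + b)))
    (Q : ℝ → ℝ)
    (hQ : ∀ t, Q t = -(1 + b) * min (α * Real.exp (-μ * t)) 1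
      + (1 + θ) * Real.exp (-μ * t)) :
    (∀ f : StieltjesFunction ℝ, Continuous f → f 0 = 0 →
        (∀ x y : ℝ, x ≤ y → f y - f x ≤ y - x) →
        IntegrableOn Q (Ioi (0:ℝ)) f.measure →
        (∫ t in Ioi (0:ℝ), Q t ∂(deductibleContract d).measure)
          ≤ ∫ t in Ioi (0:ℝ), Q t ∂f.measure) ∧
      (∫ t in Ioi (0:ℝ), min (β * Real.exp (-μ * (t + d))) 1) ≤ B := by
  have hb1 : (0:ℝ) < 1 + b := by linarith
  have hθ1 : (0:ℝ) < 1 + θ := by linarith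
  have hμ' : μ ≠ 0 := hμ.ne'
  have hr1 : (1:ℝ) < (1 + θ) / (1 + b) := (one_lt_div hb1).mpr (by linarith)
  have hexp_d : Real.exp (-μ * d) = (1 + b) / (1 + θ) := by
    rw [hd, show -μ * (1 / μ * Real.log ((1 + θ) / (1 + b)))
        = -Real.log ((1 + θ) / (1 + b)) by field_simp,
      Real.exp_neg, Real.exp_log (by positivity), inv_div]
  have hd0 : 0 ≤ d := by
    rw [hd]
    exact mul_nonneg (by positivity) (Real.log_nonneg hr1.le)
  -- sign of Q
  have hQnonneg : ∀ t ∈ Ioc (0:ℝ) d, 0 ≤ Q t := by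
    intro t ht
    rw [hQ]
    have he : Real.exp (-μ * d) ≤ Real.exp (-μ * t) :=
      Real.exp_le_exp.mpr (by nlinarith [ht.2])
    rw [hexp_d, div_le_iff₀ hθ1] at he
    have hmin : min (α * Real.exp (-μ * t)) 1 ≤ 1 := min_le_right _ _
    nlinarith
  have hQnonpos : ∀ t ∈ Ioi d, Q t ≤ 0 := by
    intro t ht
    rw [hQ]
    have he : Real.exp (-μ * t) ≤ Real.exp (-μ * d) :=
      Real.exp_le_exp.mpr (by nlinarith [mem_Ioi.mp ht])
    rw [hexp_d, le_div_iff₀ hθ1] at he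
    have hepos := Real.exp_pos (-μ * t)
    rcases le_total (α * Real.exp (-μ * t)) 1 with h | h
    · rw [min_eq_left h]
      have hθα : 1 + θ ≤ (1 + b) * α := by nlinarith
      nlinarith
    · rw [min_eq_right h]
      nlinarith
  have hQc : Continuous Q := by
    have : Continuous fun t => -(1 + b) * min (α * Real.exp (-μ * t)) 1
        + (1 + θ) * Real.exp (-μ * t) := by fun_prop
    exact this.congr fun t => (hQ t).symm
  have hQintd : IntegrableOn Q (Ioi d) volume := by
    refine Integrable.mono' ((exp_neg_integrableOn_Ioi d hμ).const_mul ((1 + b) * α + (1 + θ)))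
      hQc.aestronglyMeasurable.restrict (ae_of_all _ fun t => ?_)
    rw [hQ]
    have hepos := Real.exp_pos (-μ * t)
    have h1 : (0:ℝ) ≤ min (α * Real.exp (-μ * t)) 1 :=
      le_min (mul_nonneg (by linarith) hepos.le) one_pos.le
    have h2 : min (α * Real.exp (-μ * t)) 1 ≤ α * Real.exp (-μ * t) := min_le_left _ _
    rw [Real.norm_eq_abs, abs_le]
    constructor <;> nlinarith
  constructor
  · intro f hfc hf0 hlip hint
    have hfle : f.measure ≤ volume := lip_measure_le f hfc hlip
    have hL : (∫ t in Ioi (0:ℝ), Q t ∂(deductibleContract d).measure) = ∫ t in Ioi d, Q t := by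
      rw [ded_measure, Measure.restrict_restrict measurableSet_Ioi, Ioi_inter_Ioi,
        sup_eq_right.mpr hd0]
    rw [hL]
    have hsplit := setIntegral_union (μ := f.measure) (f := Q) Ioc_disjoint_Ioi_same
      measurableSet_Ioi (hint.mono_set Ioc_subset_Ioi_self) (hint.mono_set (Ioi_subset_Ioi hd0))
    rw [Ioc_union_Ioi_eq_Ioi hd0] at hsplit
    rw [hsplit]
    have h1 : 0 ≤ ∫ t in Ioc (0:ℝ) d, Q t ∂f.measure :=
      setIntegral_nonneg measurableSet_Ioc hQnonneg
    have h2 : (∫ t in Ioi d, Q t) ≤ ∫ t in Ioi d, Q t ∂f.measure := by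
      have hmono := integral_mono_measure (μ := f.measure.restrict (Ioi d))
        (ν := volume.restrict (Ioi d)) (f := fun t => -Q t)
        (Measure.restrict_mono subset_rfl hfle)
        ((ae_restrict_iff' measurableSet_Ioi).2 (ae_of_all _ fun t ht => by
          show (0:ℝ) ≤ -Q t
          have := hQnonpos t ht; linarith))
        hQintd.neg
      simp only [integral_neg] at hmono
      linarith
    linarith
  · set t0 := 1 / μ * Real.log (β * (1 + b) / (1 + θ)) with ht0
    have hr2 : (1:ℝ) ≤ β * (1 + b) / (1 + θ) := by
      rw [le_div_iff₀ hθ1]; nlinarith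
    have ht0nn : 0 ≤ t0 := mul_nonneg (by positivity) (Real.log_nonneg hr2)
    have hexp_t0 : Real.exp (-μ * t0) = (1 + θ) / (β * (1 + b)) := by
      rw [ht0, show -μ * (1 / μ * Real.log (β * (1 + b) / (1 + θ)))
          = -Real.log (β * (1 + b) / (1 + θ)) by field_simp,
        Real.exp_neg, Real.exp_log (by positivity), inv_div]
    have hβ0 : β ≠ 0 := by linarith
    have hkey : β * Real.exp (-μ * (t0 + d)) = 1 := by
      rw [show -μ * (t0 + d) = -μ * t0 + -μ * d by ring, Real.exp_add, hexp_t0, hexp_d]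
      field_simp
    have hmono1 : EqOn (fun t => min (β * Real.exp (-μ * (t + d))) 1) (fun _ => (1:ℝ))
        (Ioc (0:ℝ) t0) := by
      intro t ht
      refine min_eq_right ?_
      have h := Real.exp_le_exp.mpr (show -μ * (t0 + d) ≤ -μ * (t + d) by
        have : μ * (t + d) ≤ μ * (t0 + d) := mul_le_mul_of_nonneg_left (by linarith [ht.2]) hμ.le
        linarith)
      calc (1:ℝ) = β * Real.exp (-μ * (t0 + d)) := hkey.symm
        _ ≤ β * Real.exp (-μ * (t + d)) := mul_le_mul_of_nonneg_left h (by linarith)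
    have hmono2 : EqOn (fun t => min (β * Real.exp (-μ * (t + d))) 1)
        (fun t => β * Real.exp (-μ * (t + d))) (Ioi t0) := by
      intro t ht
      refine min_eq_left ?_
      have h := Real.exp_le_exp.mpr (show -μ * (t + d) ≤ -μ * (t0 + d) by
        have : μ * (t0 + d) ≤ μ * (t + d) :=
          mul_le_mul_of_nonneg_left (by linarith [mem_Ioi.mp ht]) hμ.le
        linarith)
      calc β * Real.exp (-μ * (t + d)) ≤ β * Real.exp (-μ * (t0 + d)) :=
            mul_le_mul_of_nonneg_left h (by linarith)
        _ = 1 := hkey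
    have hexpand : ∀ t : ℝ, β * Real.exp (-μ * (t + d))
        = (β * Real.exp (-μ * d)) * Real.exp (-μ * t) := by
      intro t; rw [show -μ * (t + d) = -μ * t + -μ * d by ring, Real.exp_add]; ring
    have hconst : IntegrableOn (fun _ : ℝ => (1:ℝ)) (Ioc (0:ℝ) t0) volume :=
      integrableOn_const measure_Ioc_lt_top.ne
    have hintIoc : IntegrableOn (fun t => min (β * Real.exp (-μ * (t + d))) 1)
        (Ioc (0:ℝ) t0) volume :=
      hconst.congr_fun (fun t ht => (hmono1 ht).symm) measurableSet_Ioc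
    have hintIoi : IntegrableOn (fun t => min (β * Real.exp (-μ * (t + d))) 1)
        (Ioi t0) volume := by
      have hce : IntegrableOn (fun t => β * Real.exp (-μ * d) * Real.exp (-μ * t))
          (Ioi t0) volume :=
        (exp_neg_integrableOn_Ioi t0 hμ).const_mul (β * Real.exp (-μ * d))
      exact hce.congr_fun (fun t ht => (hexpand t).symm.trans (hmono2 ht).symm)
        measurableSet_Ioi
    have hsplit := setIntegral_union (μ := volume)
      (f := fun t => min (β * Real.exp (-μ * (t + d))) 1)
      Ioc_disjoint_Ioi_same measurableSet_Ioi hintIoc hintIoi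
    rw [Ioc_union_Ioi_eq_Ioi ht0nn] at hsplit
    rw [hsplit]
    have hIoc : (∫ t in Ioc (0:ℝ) t0, min (β * Real.exp (-μ * (t + d))) 1) = t0 := by
      rw [setIntegral_congr_fun measurableSet_Ioc hmono1, setIntegral_const, smul_eq_mul,
        mul_one, Real.volume_real_Ioc, max_eq_left (by linarith), sub_zero]
    have hIoi : (∫ t in Ioi t0, min (β * Real.exp (-μ * (t + d))) 1) = 1 / μ := by
      rw [setIntegral_congr_fun measurableSet_Ioi hmono2]
      simp_rw [hexpand]
      rw [integral_const_mul, exp_integral_Ioi' μ t0 hμ]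
      have : β * Real.exp (-μ * d) * (Real.exp (-μ * t0) / μ)
          = β * Real.exp (-μ * (t0 + d)) / μ := by
        rw [show -μ * (t0 + d) = -μ * t0 + -μ * d by ring, Real.exp_add]; ring
      rw [this, hkey]
    rw [hIoc, hIoi]
    have hlog : μ * t0 = Real.log (β * (1 + b) / (1 + θ)) := by
      rw [ht0]; field_simp
    have hinv : μ * (1 / μ) = 1 := by field_simp
    nlinarith [hB]
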